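/- Let d ≥ 2, l ≥ 2, and suppose f := ((l-1)(d-1)/d)·ln((d-1)/d) - (1/d)·ln(1/d) < 0. Then there exists a unique β₀ ∈ (β*, 1/d) with Φ(β₀) = 0; moreover Φ(β) > 0 for β ∈ (0, β₀) and Φ(β) < 0 for β ∈ (β₀, 1/d). -/

import Mathlib

open Real

lemma Phi_concave_aux (d l : ℕ) (hd : 2 ≤ d) (hl : 2 ≤ l) :
    StrictConcaveOn ℝ (Set.Icc (0:ℝ) (1/(d:ℝ)))
      (fun β => -β * Real.log β + ((l : ℝ) - 1) * (1 - β) * Real.log (1 - β)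
        - ((l : ℝ) / d) * (1 - d * β) * Real.log (1 - d * β)) := by
  have hdR : (0:ℝ) < d := by positivity
  have hd2 : (2:ℝ) ≤ d := by exact_mod_cast hd
  have hl1 : (1:ℝ) ≤ l := by exact_mod_cast hl.trans' (by norm_num)
  set Φ : ℝ → ℝ := fun β => -β * Real.log β + ((l : ℝ) - 1) * (1 - β) * Real.log (1 - β)
      - ((l : ℝ) / d) * (1 - d * β) * Real.log (1 - d * β) with hΦdef
  set F1 : ℝ → ℝ := fun β => -Real.log β - ((l:ℝ)-1) * Real.log (1-β)
      + (l:ℝ) * Real.log (1-(d:ℝ)*β) with hF1def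
  have hmem : ∀ β ∈ Set.Ioo (0:ℝ) (1/(d:ℝ)), 0 < β ∧ 0 < 1 - β ∧ 0 < 1 - (d:ℝ)*β := by
    intro β hβ
    refine ⟨hβ.1, ?_, ?_⟩
    · have : β < 1 := lt_of_lt_of_le hβ.2 (by rw [div_le_one hdR]; linarith)
      linarith
    · have := hβ.2
      have : (d:ℝ) * β < 1 := by
        rw [lt_div_iff₀ hdR] at this; linarith [this]
      linarith
  have hA : ∀ β ∈ Set.Ioo (0:ℝ) (1/(d:ℝ)), HasDerivAt Φ (F1 β) β := by
    intro β hβ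
    obtain ⟨h0, h1, h2⟩ := hmem β hβ
    have d1 : HasDerivAt (fun x : ℝ => x * Real.log x) (Real.log β + 1) β :=
      Real.hasDerivAt_mul_log h0.ne'
    have a1 : HasDerivAt (fun x : ℝ => 1 - x) (-1 : ℝ) β := (hasDerivAt_id β).const_sub 1
    have a2 : HasDerivAt (fun x : ℝ => 1 - (d:ℝ)*x) (-(d:ℝ)) β := by
      simpa using ((hasDerivAt_id β).const_mul (d:ℝ)).const_sub 1
    have d2 : HasDerivAt (fun x : ℝ => (1-x) * Real.log (1-x)) ((Real.log (1-β) + 1) * (-1)) β :=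
      (Real.hasDerivAt_mul_log h1.ne').comp β a1
    have d3 : HasDerivAt (fun x : ℝ => (1-(d:ℝ)*x) * Real.log (1-(d:ℝ)*x))
        ((Real.log (1-(d:ℝ)*β) + 1) * (-(d:ℝ))) β :=
      by have := (Real.hasDerivAt_mul_log h2.ne').comp β a2; exact this
    have comb : HasDerivAt (fun x : ℝ => -(x * Real.log x)
        + ((l:ℝ)-1) * ((1-x) * Real.log (1-x))
        - ((l:ℝ)/d) * ((1-(d:ℝ)*x) * Real.log (1-(d:ℝ)*x)))
        (-(Real.log β + 1) + ((l:ℝ)-1) * ((Real.log (1-β) + 1) * (-1))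
          - ((l:ℝ)/d) * ((Real.log (1-(d:ℝ)*β) + 1) * (-(d:ℝ)))) β :=
      (d1.neg.add (d2.const_mul _)).sub (d3.const_mul _)
    have heq : Φ = fun x : ℝ => -(x * Real.log x)
        + ((l:ℝ)-1) * ((1-x) * Real.log (1-x))
        - ((l:ℝ)/d) * ((1-(d:ℝ)*x) * Real.log (1-(d:ℝ)*x)) := by
      funext x; simp only [hΦdef]; ring
    rw [heq]
    convert comb using 1
    simp only [hF1def]
    field_simp
    ring
  have hB : ∀ β ∈ Set.Ioo (0:ℝ) (1/(d:ℝ)),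
      HasDerivAt F1 (-β⁻¹ + ((l:ℝ)-1) * (1-β)⁻¹ - (l:ℝ)*(d:ℝ)*(1-(d:ℝ)*β)⁻¹) β := by
    intro β hβ
    obtain ⟨h0, h1, h2⟩ := hmem β hβ
    have a1 : HasDerivAt (fun x : ℝ => 1 - x) (-1 : ℝ) β := (hasDerivAt_id β).const_sub 1
    have a2 : HasDerivAt (fun x : ℝ => 1 - (d:ℝ)*x) (-(d:ℝ)) β := by
      simpa using ((hasDerivAt_id β).const_mul (d:ℝ)).const_sub 1
    have d1 : HasDerivAt (fun x : ℝ => Real.log x) β⁻¹ β := Real.hasDerivAt_log h0.ne'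
    have d2 : HasDerivAt (fun x : ℝ => Real.log (1-x)) ((1-β)⁻¹ * (-1)) β :=
      (Real.hasDerivAt_log h1.ne').comp β a1
    have d3 : HasDerivAt (fun x : ℝ => Real.log (1-(d:ℝ)*x)) ((1-(d:ℝ)*β)⁻¹ * (-(d:ℝ))) β :=
      by have := (Real.hasDerivAt_log h2.ne').comp β a2; exact this
    have comb := (d1.neg.sub (d2.const_mul ((l:ℝ)-1))).add (d3.const_mul (l:ℝ))
    exact comb.congr_deriv (by ring)
  have hC : ∀ β ∈ Set.Ioo (0:ℝ) (1/(d:ℝ)),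
      -β⁻¹ + ((l:ℝ)-1) * (1-β)⁻¹ - (l:ℝ)*(d:ℝ)*(1-(d:ℝ)*β)⁻¹ < 0 := by
    intro β hβ
    obtain ⟨h0, h1, h2⟩ := hmem β hβ
    have key : ((l:ℝ)-1) * (1-β)⁻¹ ≤ (l:ℝ)*(d:ℝ)*(1-(d:ℝ)*β)⁻¹ := by
      rw [← div_eq_mul_inv, ← div_eq_mul_inv, div_le_div_iff₀ h1 h2]
      nlinarith [h2, hl1, hd2, h0]
    have : (0:ℝ) < β⁻¹ := by positivity
    linarith
  have hIoo : Set.Ioo (0:ℝ) (1/(d:ℝ)) = interior (Set.Icc (0:ℝ) (1/(d:ℝ))) := by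
    rw [interior_Icc]
  have hcont : Continuous Φ := by
    have hml : Continuous (fun x : ℝ => x * Real.log x) := Real.continuous_mul_log
    have c1 : Continuous (fun β : ℝ => -β * Real.log β) := by
      exact hml.neg.congr (fun x => by simp [neg_mul])
    have c2 : Continuous (fun β : ℝ => (1-β) * Real.log (1-β)) :=
      hml.comp (continuous_const.sub continuous_id)
    have c3 : Continuous (fun β : ℝ => (1-(d:ℝ)*β) * Real.log (1-(d:ℝ)*β)) :=
      hml.comp (continuous_const.sub (continuous_const.mul continuous_id))
    have : Φ = fun β => -β * Real.log β + ((l:ℝ)-1) * ((1-β) * Real.log (1-β))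
        - ((l:ℝ)/d) * ((1-(d:ℝ)*β) * Real.log (1-(d:ℝ)*β)) := by
      funext x; simp only [hΦdef]; ring
    rw [this]
    exact (c1.add (continuous_const.mul c2)).sub (continuous_const.mul c3)
  apply strictConcaveOn_of_deriv2_neg (convex_Icc _ _) hcont.continuousOn
  intro x hx
  rw [← hIoo] at hx
  have hder1 : deriv Φ =ᶠ[nhds x] F1 := by
    filter_upwards [isOpen_Ioo.mem_nhds hx] with y hy
    exact (hA y hy).deriv
  have : deriv (deriv Φ) x = deriv F1 x := hder1.deriv_eq
  simp only [Function.iterate_succ, Function.iterate_zero, Function.comp_apply, Function.id_def]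
  rw [this, (hB x hx).deriv]
  exact hC x hx

/-- If `f = ((l-1)(d-1)/d)ln((d-1)/d) - (1/d)ln(1/d) < 0` and `β*` is the unique maximizer
of `Φ` on `(0,1/d)`, then there is a unique `β₀ ∈ (β*,1/d)` with `Φ(β₀) = 0`; moreover
`Φ > 0` on `(0,β₀)` and `Φ < 0` on `(β₀,1/d)`. -/
theorem Phi_root_beta_zero (d l : ℕ) (hd : 2 ≤ d) (hl : 2 ≤ l)
    (Φ : ℝ → ℝ)
    (hΦ : Φ = fun β => -β * Real.log β + ((l : ℝ) - 1) * (1 - β) * Real.log (1 - β)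
      - ((l : ℝ) / d) * (1 - d * β) * Real.log (1 - d * β))
    (hf : ((l : ℝ) - 1) * ((d : ℝ) - 1) / d * Real.log (((d : ℝ) - 1) / d)
      - (1 / d) * Real.log (1 / (d : ℝ)) < 0)
    (βs : ℝ) (hβs : βs ∈ Set.Ioo (0 : ℝ) (1 / d))
    (hmax : ∀ β ∈ Set.Ioo (0 : ℝ) (1 / (d : ℝ)), Φ β ≤ Φ βs) :
    ∃ β₀ ∈ Set.Ioo βs (1 / (d : ℝ)), Φ β₀ = 0 ∧
      (∀ β' ∈ Set.Ioo βs (1 / (d : ℝ)), Φ β' = 0 → β' = β₀) ∧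
      (∀ β ∈ Set.Ioo (0 : ℝ) β₀, 0 < Φ β) ∧
      (∀ β ∈ Set.Ioo β₀ (1 / (d : ℝ)), Φ β < 0) := by
  have hdR : (0:ℝ) < d := by positivity
  have hd2 : (2:ℝ) ≤ d := by exact_mod_cast hd
  have hl1 : (1:ℝ) ≤ l := by exact_mod_cast hl.trans' (by norm_num)
  -- continuity of Φ
  have hcont : Continuous Φ := by
    have hml : Continuous (fun x : ℝ => x * Real.log x) := Real.continuous_mul_log
    have c1 : Continuous (fun β : ℝ => -β * Real.log β) := by
      exact hml.neg.congr (fun x => by simp [neg_mul])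
    have c2 : Continuous (fun β : ℝ => (1-β) * Real.log (1-β)) :=
      hml.comp (continuous_const.sub continuous_id)
    have c3 : Continuous (fun β : ℝ => (1-(d:ℝ)*β) * Real.log (1-(d:ℝ)*β)) :=
      hml.comp (continuous_const.sub (continuous_const.mul continuous_id))
    have heq : Φ = fun β => -β * Real.log β + ((l:ℝ)-1) * ((1-β) * Real.log (1-β))
        - ((l:ℝ)/d) * ((1-(d:ℝ)*β) * Real.log (1-(d:ℝ)*β)) := by
      rw [hΦ]; funext x; ring
    rw [heq]
    exact (c1.add (continuous_const.mul c2)).sub (continuous_const.mul c3)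
  have hconc : StrictConcaveOn ℝ (Set.Icc (0:ℝ) (1/(d:ℝ))) Φ := by
    rw [hΦ]; exact Phi_concave_aux d l hd hl
  -- endpoint values
  have hΦ0 : Φ 0 = 0 := by simp [hΦ]
  have hΦd : Φ (1/(d:ℝ)) < 0 := by
    have e1 : 1 - (d:ℝ)*(1/d) = 0 := by field_simp; ring
    have e2 : 1 - 1/(d:ℝ) = ((d:ℝ)-1)/d := by field_simp
    have heval : Φ (1/(d:ℝ)) = ((l:ℝ)-1) * ((d:ℝ)-1)/d * Real.log (((d:ℝ)-1)/d)
        - (1/d) * Real.log (1/(d:ℝ)) := by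
      rw [hΦ]
      simp only [e1, e2, Real.log_zero, mul_zero, sub_zero]
      ring
    linarith
  -- Φ βs > 0
  have hΦs : 0 < Φ βs := by
    set m : ℝ := min (1/(d:ℝ)) (Real.exp (-(l:ℝ))) with hmdef
    have hmpos : 0 < m := lt_min (by positivity) (Real.exp_pos _)
    set β₁ : ℝ := m / 2 with hβ₁def
    have hβ₁pos : 0 < β₁ := by positivity
    have hβ₁ltm : β₁ < m := half_lt_self hmpos
    have hβ₁lt : β₁ < 1/(d:ℝ) := lt_of_lt_of_le hβ₁ltm (min_le_left _ _)
    have hβ₁mem : β₁ ∈ Set.Ioo (0:ℝ) (1/(d:ℝ)) := ⟨hβ₁pos, hβ₁lt⟩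
    have hlog : Real.log β₁ < -(l:ℝ) := by
      have : β₁ < Real.exp (-(l:ℝ)) := lt_of_lt_of_le hβ₁ltm (min_le_right _ _)
      calc Real.log β₁ < Real.log (Real.exp (-(l:ℝ))) := Real.log_lt_log hβ₁pos this
        _ = -(l:ℝ) := Real.log_exp _
    have h1β : 0 < 1 - β₁ := by
      have : β₁ < 1 := lt_of_lt_of_le hβ₁lt (by rw [div_le_one hdR]; linarith)
      linarith
    have h2β : 0 < 1 - (d:ℝ)*β₁ := by
      have := hβ₁lt
      rw [lt_div_iff₀ hdR] at this
      linarith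
    -- (1-β₁) log (1-β₁) ≥ -β₁
    have hT2 : -β₁ ≤ (1-β₁) * Real.log (1-β₁) := by
      have h := Real.log_le_sub_one_of_pos (inv_pos.mpr h1β)
      rw [Real.log_inv] at h
      have hinv : (1-β₁) * (1-β₁)⁻¹ = 1 := mul_inv_cancel₀ h1β.ne'
      nlinarith [mul_le_mul_of_nonneg_left h h1β.le]
    -- third term nonneg
    have hT3 : ((l:ℝ)/d) * (1 - (d:ℝ)*β₁) * Real.log (1 - (d:ℝ)*β₁) ≤ 0 := by
      have hlognp : Real.log (1 - (d:ℝ)*β₁) ≤ 0 := by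
        apply Real.log_nonpos h2β.le
        nlinarith [hβ₁pos, hdR]
      have hcoef : 0 ≤ ((l:ℝ)/d) * (1 - (d:ℝ)*β₁) := by positivity
      exact mul_nonpos_of_nonneg_of_nonpos hcoef hlognp
    have hΦβ₁ : 0 < Φ β₁ := by
      rw [hΦ]
      simp only
      have hfirst : β₁ * 1 < β₁ * (-Real.log β₁ - ((l:ℝ)-1)) := by
        apply mul_lt_mul_of_pos_left _ hβ₁pos
        linarith
      nlinarith [mul_le_mul_of_nonneg_left hT2 (by linarith : (0:ℝ) ≤ (l:ℝ)-1)]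
    exact lt_of_lt_of_le hΦβ₁ (hmax β₁ hβ₁mem)
  -- a point β₂ ∈ (βs, 1/d) with Φ β₂ < 0
  obtain ⟨β₂, hβ₂mem, hβ₂neg⟩ :
      ∃ β₂ ∈ Set.Ioo βs (1/(d:ℝ)), Φ β₂ < 0 := by
    have hev : ∀ᶠ x in nhds (1/(d:ℝ)), Φ x < 0 :=
      (hcont.tendsto (1/(d:ℝ))).eventually_lt_const hΦd
    rw [Metric.eventually_nhds_iff] at hev
    obtain ⟨ε, hε, hball⟩ := hev
    refine ⟨max ((βs + 1/(d:ℝ))/2) (1/(d:ℝ) - ε/2), ⟨?_, ?_⟩, ?_⟩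
    · have := hβs.2
      calc βs < (βs + 1/(d:ℝ))/2 := by linarith
        _ ≤ _ := le_max_left _ _
    · apply max_lt
      · linarith [hβs.2]
      · linarith
    · apply hball
      rw [Real.dist_eq]
      have h1 : max ((βs + 1/(d:ℝ))/2) (1/(d:ℝ) - ε/2) < 1/(d:ℝ) := by
        apply max_lt
        · linarith [hβs.2]
        · linarith
      have h2 : 1/(d:ℝ) - ε/2 ≤ max ((βs + 1/(d:ℝ))/2) (1/(d:ℝ) - ε/2) := le_max_right _ _
      rw [abs_of_nonpos (by linarith)]
      linarith
  -- IVT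
  have hivt := intermediate_value_Icc' hβ₂mem.1.le hcont.continuousOn
  have h0mem : (0:ℝ) ∈ Set.Icc (Φ β₂) (Φ βs) := ⟨hβ₂neg.le, hΦs.le⟩
  obtain ⟨β₀, hβ₀Icc, hβ₀0⟩ := hivt h0mem
  have hβ₀gt : βs < β₀ := by
    rcases lt_or_eq_of_le hβ₀Icc.1 with h | h
    · exact h
    · exfalso; rw [← h] at hβ₀0; linarith
  have hβ₀lt : β₀ < 1/(d:ℝ) := lt_of_le_of_lt hβ₀Icc.2 hβ₂mem.2
  have hβ₀pos : 0 < β₀ := lt_trans hβs.1 hβ₀gt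
  have hβ₀Icc' : β₀ ∈ Set.Icc (0:ℝ) (1/(d:ℝ)) := ⟨hβ₀pos.le, hβ₀lt.le⟩
  have h0Icc : (0:ℝ) ∈ Set.Icc (0:ℝ) (1/(d:ℝ)) := ⟨le_refl _, by positivity⟩
  -- positivity on (0, β₀)
  have hpos : ∀ β ∈ Set.Ioo (0:ℝ) β₀, 0 < Φ β := by
    intro β hβ
    have hb : 0 < β/β₀ := div_pos hβ.1 hβ₀pos
    have hb1 : β/β₀ < 1 := (div_lt_one hβ₀pos).mpr hβ.2
    have hkey := hconc.2 h0Icc hβ₀Icc' (ne_of_lt hβ₀pos)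
      (show (0:ℝ) < 1 - β/β₀ by linarith) hb (by ring)
    simp only [smul_eq_mul, mul_zero, zero_add, hΦ0, hβ₀0, add_zero] at hkey
    rwa [div_mul_cancel₀ _ hβ₀pos.ne'] at hkey
  -- negativity on (β₀, 1/d)
  have hneg : ∀ β ∈ Set.Ioo β₀ (1/(d:ℝ)), Φ β < 0 := by
    intro β hβ
    have hβpos : 0 < β := lt_trans hβ₀pos hβ.1
    have hβIcc : β ∈ Set.Icc (0:ℝ) (1/(d:ℝ)) := ⟨hβpos.le, hβ.2.le⟩
    have hb : 0 < β₀/β := div_pos hβ₀pos hβpos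
    have hb1 : β₀/β < 1 := (div_lt_one hβpos).mpr hβ.1
    have hkey := hconc.2 h0Icc hβIcc (ne_of_lt hβpos)
      (show (0:ℝ) < 1 - β₀/β by linarith) hb (by ring)
    simp only [smul_eq_mul, mul_zero, zero_add, hΦ0, add_zero] at hkey
    rw [div_mul_cancel₀ _ hβpos.ne', hβ₀0] at hkey
    nlinarith
  refine ⟨β₀, ⟨hβ₀gt, hβ₀lt⟩, hβ₀0, ?_, hpos, hneg⟩
  intro β' hβ' hβ'0
  rcases lt_trichotomy β' β₀ with h | h | h
  · exfalso
    have := hpos β' ⟨lt_trans hβs.1 hβ'.1, h⟩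
    linarith
  · exact h
  · exfalso
    have := hneg β' ⟨h, hβ'.2⟩
    linarith
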